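/- For every integer m ≥ 2, the sequence of Boros-Moll coefficients is log-concave: d_i(m)² ≥ d_{i+1}(m) · d_{i-1}(m) for all 1 ≤ i ≤ m−1. -/

import Mathlib

noncomputable def d (m i : ℕ) : ℚ :=
  (2:ℚ)^(-(2*(m:ℤ))) * ∑ k ∈ Finset.Icc i m,
    (2:ℚ)^k * (Nat.choose (2*m-2*k) (m-k)) * (Nat.choose (m+k) k) * (Nat.choose k i)

noncomputable def Fq (m k i : ℕ) : ℚ :=
  (2:ℚ)^k * (Nat.choose (2*m-2*k) (m-k)) * (Nat.choose (m+k) k) * (Nat.choose k i)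

noncomputable def gq (m i k : ℕ) : ℚ :=
  -(((k:ℚ)-i)*(2*k)*(2*(m:ℚ)+1-2*k))/(((i:ℚ)+1)*((m:ℚ)+1-k)) * Fq m k i

noncomputable def gq0 (m k : ℕ) : ℚ :=
  -((2*(k:ℚ))*(2*(m:ℚ)+1-2*k))/((m:ℚ)+1-k) * Fq m k 0

lemma d_def' (m i : ℕ) : d m i = (2:ℚ)^(-(2*(m:ℤ))) * ∑ k ∈ Finset.Icc i m, Fq m k i := rfl

lemma cast_h1 (k i : ℕ) (h : i ≤ k) :
    ((Nat.choose k (i+1) : ℚ)) * ((i:ℚ)+1) = (Nat.choose k i : ℚ) * ((k:ℚ) - i) := by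
  have := congrArg (Nat.cast (R := ℚ)) (Nat.choose_succ_right_eq k i)
  push_cast [Nat.cast_sub h] at this
  linarith

lemma cast_row (n k : ℕ) (h : k ≤ n) :
    ((Nat.choose (n+1) k : ℚ)) * ((n:ℚ)+1-k) = (Nat.choose n k : ℚ) * ((n:ℚ)+1) := by
  have a : Nat.choose (n+1) (k+1) * (k+1) = Nat.choose (n+1) k * (n+1-k) :=
    Nat.choose_succ_right_eq (n+1) k
  have b : (n+1) * Nat.choose n k = Nat.choose (n+1) (k+1) * (k+1) := Nat.add_one_mul_choose_eq n k
  have c : Nat.choose (n+1) k * (n+1-k) = (n+1) * Nat.choose n k := by omega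
  have := congrArg (Nat.cast (R := ℚ)) c
  push_cast [Nat.cast_sub (by omega : k ≤ n+1)] at this
  linarith

lemma cast_col (n k : ℕ) :
    ((Nat.choose (n+1) (k+1) : ℚ)) * ((k:ℚ)+1) = (Nat.choose n k : ℚ) * ((n:ℚ)+1) := by
  have := congrArg (Nat.cast (R := ℚ)) (Nat.add_one_mul_choose_eq n k)
  push_cast at this
  linarith

lemma cast_central (n : ℕ) :
    ((Nat.choose (2*n+2) (n+1) : ℚ)) * (((n:ℚ)+1)*((n:ℚ)+1))
      = (Nat.choose (2*n) n : ℚ) * ((2*(n:ℚ)+2)*(2*(n:ℚ)+1)) := by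
  have h := Nat.succ_mul_centralBinom_succ n
  have h1 : Nat.centralBinom (n+1) = Nat.choose (2*n+2) (n+1) := by
    rw [show 2*n+2 = 2*(n+1) from by ring]; rfl
  have h2 : Nat.centralBinom n = Nat.choose (2*n) n := rfl
  rw [h1, h2] at h
  have := congrArg (Nat.cast (R := ℚ)) h
  push_cast at this
  nlinarith

set_option maxHeartbeats 16000000 in
lemma pointwise (m k i : ℕ) (hik : i ≤ k) (hk : k + 1 ≤ m) :
    ((m:ℚ)+1)/2 * Fq (m+1) k (i+1) - (4*(m:ℚ)+2*i+5) * Fq m k (i+1)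
      - (2*(m:ℚ)+2*i+2) * Fq m k i = gq m i (k+1) - gq m i k := by
  obtain ⟨p, rfl⟩ : ∃ p, m = k+1+p := ⟨m-(k+1), by omega⟩
  simp only [Fq, gq]
  simp only [show 2*(k+1+p+1)-2*k = 2*p+4 from by omega,
    show (k+1+p+1)-k = p+2 from by omega,
    show 2*(k+1+p)-2*k = 2*p+2 from by omega,
    show (k+1+p)-k = p+1 from by omega,
    show 2*(k+1+p)-2*(k+1) = 2*p from by omega,
    show (k+1+p)-(k+1) = p from by omega,
    show (k+1+p+1)+k = ((k+1+p)+k)+1 from by omega,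
    show (k+1+p)+(k+1) = ((k+1+p)+k)+1 from by omega]
  have E_up : (Nat.choose (2*p+4) (p+2) : ℚ)
      = (Nat.choose (2*p+2) (p+1) : ℚ) * ((2*(p:ℚ)+4)*(2*(p:ℚ)+3)) / (((p:ℚ)+2)*((p:ℚ)+2)) := by
    rw [eq_div_iff (by positivity)]
    have h := cast_central (p+1)
    simp only [show 2*(p+1)+2 = 2*p+4 from by omega, show (p+1)+1 = p+2 from by omega,
      show 2*(p+1) = 2*p+2 from by omega] at h
    push_cast at h ⊢
    linear_combination h
  have E_dn : (Nat.choose (2*p) p : ℚ)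
      = (Nat.choose (2*p+2) (p+1) : ℚ) * (((p:ℚ)+1)*((p:ℚ)+1)) / ((2*(p:ℚ)+2)*(2*(p:ℚ)+1)) := by
    rw [eq_div_iff (by positivity)]
    linear_combination (cast_central p).symm
  have E_r : (Nat.choose (((k+1+p)+k)+1) k : ℚ)
      = (Nat.choose ((k+1+p)+k) k : ℚ) * (((k+1+p)+k:ℚ)+1) / ((k:ℚ)+(p:ℚ)+2) := by
    rw [eq_div_iff (by positivity)]
    have h := cast_row ((k+1+p)+k) k (by omega)
    push_cast at h ⊢
    linear_combination h
  have E_c : (Nat.choose (((k+1+p)+k)+1) (k+1) : ℚ)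
      = (Nat.choose ((k+1+p)+k) k : ℚ) * (((k+1+p)+k:ℚ)+1) / ((k:ℚ)+1) := by
    rw [eq_div_iff (by positivity)]
    have h := cast_col ((k+1+p)+k) k
    push_cast at h ⊢
    linear_combination h
  have E_i : (Nat.choose k (i+1) : ℚ)
      = (Nat.choose k i : ℚ) * ((k:ℚ)-(i:ℚ)) / ((i:ℚ)+1) := by
    rw [eq_div_iff (by positivity)]
    linear_combination cast_h1 k i hik
  have E_k : (Nat.choose (k+1) i : ℚ)
      = (Nat.choose k i : ℚ) * ((k:ℚ)+1) / ((k:ℚ)+1-(i:ℚ)) := by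
    rw [eq_div_iff (by
      have : (i:ℚ) ≤ k := by exact_mod_cast hik
      intro h; nlinarith [this, h])]
    have h := cast_row k i hik
    push_cast at h ⊢
    linear_combination h
  rw [E_up, E_dn, E_r, E_c, E_i, E_k]
  have hi0 : ((i:ℚ)+1) ≠ 0 := by positivity
  have hk0 : ((k:ℚ)+1) ≠ 0 := by positivity
  have hki : ((k:ℚ)+1-(i:ℚ)) ≠ 0 := by
    have : (i:ℚ) ≤ k := by exact_mod_cast hik
    intro h; nlinarith
  have hp1 : ((p:ℚ)+1) ≠ 0 := by positivity
  have hp2 : ((p:ℚ)+2) ≠ 0 := by positivity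
  have h21 : (2*(p:ℚ)+1) ≠ 0 := by positivity
  have h22 : (2*(p:ℚ)+2) ≠ 0 := by positivity
  have hd1 : ((k:ℚ)+(p:ℚ)+2) ≠ 0 := by positivity
  have key : ((k:ℚ)+1+(p:ℚ)+1)/2 *
        ( ((2*(p:ℚ)+4)*(2*(p:ℚ)+3)/(((p:ℚ)+2)*((p:ℚ)+2))) * ((2*(k:ℚ)+(p:ℚ)+2)/((k:ℚ)+(p:ℚ)+2))
          * (((k:ℚ)-(i:ℚ))/((i:ℚ)+1)) )
      - (4*((k:ℚ)+1+(p:ℚ))+2*(i:ℚ)+5) * (((k:ℚ)-(i:ℚ))/((i:ℚ)+1))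
      - (2*((k:ℚ)+1+(p:ℚ))+2*(i:ℚ)+2)
      = -(((k:ℚ)+1-(i:ℚ))*(2*((k:ℚ)+1))*(2*((k:ℚ)+1+(p:ℚ))+1-2*((k:ℚ)+1)))
            /(((i:ℚ)+1)*(((k:ℚ)+1+(p:ℚ))+1-((k:ℚ)+1)))
          * (2 * (((p:ℚ)+1)*((p:ℚ)+1)/((2*(p:ℚ)+2)*(2*(p:ℚ)+1))) * ((2*(k:ℚ)+(p:ℚ)+2)/((k:ℚ)+1))
             * (((k:ℚ)+1)/((k:ℚ)+1-(i:ℚ))))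
        - ( -(((k:ℚ)-(i:ℚ))*(2*(k:ℚ))*(2*((k:ℚ)+1+(p:ℚ))+1-2*(k:ℚ)))
            /(((i:ℚ)+1)*(((k:ℚ)+1+(p:ℚ))+1-(k:ℚ))) ) := by
    have hq1 : (((k:ℚ)+1+(p:ℚ))+1-((k:ℚ)+1)) = (p:ℚ)+1 := by ring
    have hq2 : (((k:ℚ)+1+(p:ℚ))+1-(k:ℚ)) = (p:ℚ)+2 := by ring
    rw [hq1, hq2]
    field_simp
    ring
  push_cast
  linear_combination ((2:ℚ)^k * (Nat.choose (2*p+2) (p+1) : ℚ)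
      * (Nat.choose (k+1+p+k) k : ℚ) * (Nat.choose k i : ℚ)) * key

lemma telescope_Icc (g : ℕ → ℚ) (a n : ℕ) :
    ∑ k ∈ Finset.Icc a (a+n), (g (k+1) - g k) = g (a+n+1) - g a := by
  induction n with
  | zero => simp
  | succ n ih =>
      rw [show a+(n+1) = (a+n)+1 from rfl, Finset.sum_Icc_succ_top (by omega), ih]; ring

lemma boundaryS (m i : ℕ) (him : i + 1 ≤ m) :
    gq m i m + (((m:ℚ)+1)/2 * Fq (m+1) m (i+1) - (4*(m:ℚ)+2*(i:ℚ)+5) * Fq m m (i+1)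
      - (2*(m:ℚ)+2*(i:ℚ)+2) * Fq m m i) = -(((m:ℚ)+1)/2 * Fq (m+1) (m+1) (i+1)) := by
  simp only [Fq, gq]
  simp only [show 2*(m+1)-2*m = 2 from by omega, show (m+1)-m = 1 from by omega,
    show 2*m-2*m = 0 from by omega, show m-m = 0 from by omega,
    show 2*(m+1)-2*(m+1) = 0 from by omega, show (m+1)-(m+1) = 0 from by omega,
    show (m+1)+m = 2*m+1 from by omega, show m+m = 2*m from by omega,
    show (m+1)+(m+1) = 2*m+2 from by omega,
    show Nat.choose 2 1 = 2 from rfl, show Nat.choose 0 0 = 1 from rfl]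
  have hi : i ≤ m := by omega
  have Eb_r : (Nat.choose (2*m+1) m : ℚ)
      = (Nat.choose (2*m) m : ℚ) * (2*(m:ℚ)+1) / ((m:ℚ)+1) := by
    rw [eq_div_iff (by positivity)]
    have h := cast_row (2*m) m (by omega)
    push_cast at h ⊢
    linear_combination h
  have Eb_up : (Nat.choose (2*m+2) (m+1) : ℚ)
      = (Nat.choose (2*m) m : ℚ) * ((2*(m:ℚ)+2)*(2*(m:ℚ)+1)) / (((m:ℚ)+1)*((m:ℚ)+1)) := by
    rw [eq_div_iff (by positivity)]
    linear_combination cast_central m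
  have Eb_i : (Nat.choose m (i+1) : ℚ)
      = (Nat.choose m i : ℚ) * ((m:ℚ)-(i:ℚ)) / ((i:ℚ)+1) := by
    rw [eq_div_iff (by positivity)]
    linear_combination cast_h1 m i hi
  have Eb_c : (Nat.choose (m+1) (i+1) : ℚ)
      = (Nat.choose m i : ℚ) * ((m:ℚ)+1) / ((i:ℚ)+1) := by
    rw [eq_div_iff (by positivity)]
    linear_combination cast_col m i
  rw [Eb_r, Eb_up, Eb_i, Eb_c]
  have hi0 : ((i:ℚ)+1) ≠ 0 := by positivity
  have hm0 : ((m:ℚ)+1) ≠ 0 := by positivity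
  have key2 : -(((m:ℚ)-i)*(2*m)*(2*(m:ℚ)+1-2*m))/(((i:ℚ)+1)*((m:ℚ)+1-m))
      + (((m:ℚ)+1)/2 * (2 * ((2*(m:ℚ)+1)/((m:ℚ)+1)) * (((m:ℚ)-(i:ℚ))/((i:ℚ)+1)))
        - (4*(m:ℚ)+2*(i:ℚ)+5) * (((m:ℚ)-(i:ℚ))/((i:ℚ)+1))
        - (2*(m:ℚ)+2*(i:ℚ)+2))
      = -(((m:ℚ)+1)/2 * (2 * (((2*(m:ℚ)+2)*(2*(m:ℚ)+1))/(((m:ℚ)+1)*((m:ℚ)+1)))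
            * (((m:ℚ)+1)/((i:ℚ)+1)))) := by
    rw [show ((m:ℚ)+1-m) = 1 from by ring]
    field_simp
    ring
  push_cast
  linear_combination ((2:ℚ)^m * (Nat.choose (2*m) m : ℚ) * (Nat.choose m i : ℚ)) * key2

lemma gq_self (m i : ℕ) : gq m i i = 0 := by
  simp [gq]

lemma recS (m i : ℕ) (h : i + 1 ≤ m) :
    2*((m:ℚ)+1) * d (m+1) (i+1)
      = (4*(m:ℚ)+2*(i:ℚ)+5) * d m (i+1) + (2*(m:ℚ)+2*(i:ℚ)+2) * d m i := by
  rw [d_def', d_def', d_def']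
  have hz : (2:ℚ)^(-(2*(((m+1):ℕ):ℤ))) = (2:ℚ)^(-(2*(m:ℤ))) * (1/4) := by
    push_cast
    rw [show -(2*((m:ℤ)+1)) = -(2*(m:ℤ)) + (-2) from by ring, zpow_add₀ (by norm_num)]
    norm_num
  rw [hz]
  have e1 : ∑ k ∈ Finset.Icc (i+1) (m+1), Fq (m+1) k (i+1)
      = ∑ k ∈ Finset.Icc i (m+1), Fq (m+1) k (i+1) := by
    apply Finset.sum_subset (Finset.Icc_subset_Icc_left (by omega))
    intro x hx hx2
    have hxi : x = i := by
      simp only [Finset.mem_Icc] at hx hx2; omega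
    rw [hxi]
    simp [Fq, Nat.choose_eq_zero_of_lt (Nat.lt_succ_self i)]
  have e2 : ∑ k ∈ Finset.Icc (i+1) m, Fq m k (i+1)
      = ∑ k ∈ Finset.Icc i m, Fq m k (i+1) := by
    apply Finset.sum_subset (Finset.Icc_subset_Icc_left (by omega))
    intro x hx hx2
    have hxi : x = i := by
      simp only [Finset.mem_Icc] at hx hx2; omega
    rw [hxi]
    simp [Fq, Nat.choose_eq_zero_of_lt (Nat.lt_succ_self i)]
  rw [e1, e2, Finset.sum_Icc_succ_top (by omega : i ≤ m+1)]
  have main : ∑ k ∈ Finset.Icc i m,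
      (((m:ℚ)+1)/2 * Fq (m+1) k (i+1) - (4*(m:ℚ)+2*(i:ℚ)+5) * Fq m k (i+1)
        - (2*(m:ℚ)+2*(i:ℚ)+2) * Fq m k i)
      = -(((m:ℚ)+1)/2 * Fq (m+1) (m+1) (i+1)) := by
    obtain ⟨n, hn⟩ : ∃ n, m = (i+n)+1 := ⟨m-(i+1), by omega⟩
    rw [hn, Finset.sum_Icc_succ_top (by omega)]
    have tel : ∑ k ∈ Finset.Icc i (i+n),
        (((m:ℚ)+1)/2 * Fq (m+1) k (i+1) - (4*(m:ℚ)+2*(i:ℚ)+5) * Fq m k (i+1)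
          - (2*(m:ℚ)+2*(i:ℚ)+2) * Fq m k i)
        = gq m i (i+n+1) - gq m i i := by
      rw [← telescope_Icc (gq m i) i n]
      apply Finset.sum_congr rfl
      intro k hk
      simp only [Finset.mem_Icc] at hk
      exact pointwise m k i hk.1 (by omega)
    rw [hn] at tel
    rw [tel, gq_self, sub_zero]
    have hb := boundaryS ((i+n)+1) i (by omega)
    push_cast at hb ⊢
    linear_combination hb
  simp only [Finset.sum_sub_distrib, ← Finset.mul_sum] at main
  linear_combination ((2:ℚ)^(-(2*(m:ℤ)))) * main

lemma pointwise0 (m k : ℕ) (hk : k + 1 ≤ m) :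
    ((m:ℚ)+1)/2 * Fq (m+1) k 0 - (4*(m:ℚ)+3) * Fq m k 0 = gq0 m (k+1) - gq0 m k := by
  obtain ⟨p, rfl⟩ : ∃ p, m = k+1+p := ⟨m-(k+1), by omega⟩
  simp only [Fq, gq0]
  simp only [show 2*(k+1+p+1)-2*k = 2*p+4 from by omega,
    show (k+1+p+1)-k = p+2 from by omega,
    show 2*(k+1+p)-2*k = 2*p+2 from by omega,
    show (k+1+p)-k = p+1 from by omega,
    show 2*(k+1+p)-2*(k+1) = 2*p from by omega,
    show (k+1+p)-(k+1) = p from by omega,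
    show (k+1+p+1)+k = ((k+1+p)+k)+1 from by omega,
    show (k+1+p)+(k+1) = ((k+1+p)+k)+1 from by omega,
    Nat.choose_zero_right]
  have E_up : (Nat.choose (2*p+4) (p+2) : ℚ)
      = (Nat.choose (2*p+2) (p+1) : ℚ) * ((2*(p:ℚ)+4)*(2*(p:ℚ)+3)) / (((p:ℚ)+2)*((p:ℚ)+2)) := by
    rw [eq_div_iff (by positivity)]
    have h := cast_central (p+1)
    simp only [show 2*(p+1)+2 = 2*p+4 from by omega, show (p+1)+1 = p+2 from by omega,
      show 2*(p+1) = 2*p+2 from by omega] at h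
    push_cast at h ⊢
    linear_combination h
  have E_dn : (Nat.choose (2*p) p : ℚ)
      = (Nat.choose (2*p+2) (p+1) : ℚ) * (((p:ℚ)+1)*((p:ℚ)+1)) / ((2*(p:ℚ)+2)*(2*(p:ℚ)+1)) := by
    rw [eq_div_iff (by positivity)]
    linear_combination (cast_central p).symm
  have E_r : (Nat.choose (((k+1+p)+k)+1) k : ℚ)
      = (Nat.choose ((k+1+p)+k) k : ℚ) * (((k+1+p)+k:ℚ)+1) / ((k:ℚ)+(p:ℚ)+2) := by
    rw [eq_div_iff (by positivity)]
    have h := cast_row ((k+1+p)+k) k (by omega)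
    push_cast at h ⊢
    linear_combination h
  have E_c : (Nat.choose (((k+1+p)+k)+1) (k+1) : ℚ)
      = (Nat.choose ((k+1+p)+k) k : ℚ) * (((k+1+p)+k:ℚ)+1) / ((k:ℚ)+1) := by
    rw [eq_div_iff (by positivity)]
    have h := cast_col ((k+1+p)+k) k
    push_cast at h ⊢
    linear_combination h
  rw [E_up, E_dn, E_r, E_c]
  have key : ((k:ℚ)+1+(p:ℚ)+1)/2 *
        ( ((2*(p:ℚ)+4)*(2*(p:ℚ)+3)/(((p:ℚ)+2)*((p:ℚ)+2))) * ((2*(k:ℚ)+(p:ℚ)+2)/((k:ℚ)+(p:ℚ)+2)) )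
      - (4*((k:ℚ)+1+(p:ℚ))+3)
      = -((2*((k:ℚ)+1))*(2*((k:ℚ)+1+(p:ℚ))+1-2*((k:ℚ)+1)))
            /((((k:ℚ)+1+(p:ℚ))+1-((k:ℚ)+1)))
          * (2 * (((p:ℚ)+1)*((p:ℚ)+1)/((2*(p:ℚ)+2)*(2*(p:ℚ)+1))) * ((2*(k:ℚ)+(p:ℚ)+2)/((k:ℚ)+1)))
        - ( -((2*(k:ℚ))*(2*((k:ℚ)+1+(p:ℚ))+1-2*(k:ℚ)))
            /((((k:ℚ)+1+(p:ℚ))+1-(k:ℚ))) ) := by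
    rw [show (((k:ℚ)+1+(p:ℚ))+1-((k:ℚ)+1)) = (p:ℚ)+1 from by ring,
      show (((k:ℚ)+1+(p:ℚ))+1-(k:ℚ)) = (p:ℚ)+2 from by ring]
    have hk0 : ((k:ℚ)+1) ≠ 0 := by positivity
    have hp1 : ((p:ℚ)+1) ≠ 0 := by positivity
    have hp2 : ((p:ℚ)+2) ≠ 0 := by positivity
    have h21 : (2*(p:ℚ)+1) ≠ 0 := by positivity
    have h22 : (2*(p:ℚ)+2) ≠ 0 := by positivity
    have hd1 : ((k:ℚ)+(p:ℚ)+2) ≠ 0 := by positivity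
    field_simp
    ring
  push_cast
  linear_combination ((2:ℚ)^k * (Nat.choose (2*p+2) (p+1) : ℚ)
      * (Nat.choose (k+1+p+k) k : ℚ)) * key

lemma boundary0 (m : ℕ) :
    gq0 m m + (((m:ℚ)+1)/2 * Fq (m+1) m 0 - (4*(m:ℚ)+3) * Fq m m 0)
      = -(((m:ℚ)+1)/2 * Fq (m+1) (m+1) 0) := by
  simp only [Fq, gq0]
  simp only [show 2*(m+1)-2*m = 2 from by omega, show (m+1)-m = 1 from by omega,
    show 2*m-2*m = 0 from by omega, show m-m = 0 from by omega,
    show 2*(m+1)-2*(m+1) = 0 from by omega, show (m+1)-(m+1) = 0 from by omega,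
    show (m+1)+m = 2*m+1 from by omega, show m+m = 2*m from by omega,
    show (m+1)+(m+1) = 2*m+2 from by omega,
    show Nat.choose 2 1 = 2 from rfl, show Nat.choose 0 0 = 1 from rfl,
    Nat.choose_zero_right]
  have Eb_r : (Nat.choose (2*m+1) m : ℚ)
      = (Nat.choose (2*m) m : ℚ) * (2*(m:ℚ)+1) / ((m:ℚ)+1) := by
    rw [eq_div_iff (by positivity)]
    have h := cast_row (2*m) m (by omega)
    push_cast at h ⊢
    linear_combination h
  have Eb_up : (Nat.choose (2*m+2) (m+1) : ℚ)
      = (Nat.choose (2*m) m : ℚ) * ((2*(m:ℚ)+2)*(2*(m:ℚ)+1)) / (((m:ℚ)+1)*((m:ℚ)+1)) := by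
    rw [eq_div_iff (by positivity)]
    linear_combination cast_central m
  rw [Eb_r, Eb_up]
  have hm0 : ((m:ℚ)+1) ≠ 0 := by positivity
  have key2 : -((2*(m:ℚ))*(2*(m:ℚ)+1-2*(m:ℚ)))/(((m:ℚ)+1-(m:ℚ)))
      + (((m:ℚ)+1)/2 * (2 * ((2*(m:ℚ)+1)/((m:ℚ)+1))) - (4*(m:ℚ)+3))
      = -(((m:ℚ)+1)/2 * (2 * (((2*(m:ℚ)+2)*(2*(m:ℚ)+1))/(((m:ℚ)+1)*((m:ℚ)+1))))) := by
    rw [show ((m:ℚ)+1-(m:ℚ)) = 1 from by ring]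
    field_simp
    ring
  push_cast
  linear_combination ((2:ℚ)^m * (Nat.choose (2*m) m : ℚ)) * key2

lemma gq0_zero (m : ℕ) : gq0 m 0 = 0 := by
  simp [gq0]

lemma rec0 (m : ℕ) (hm : 1 ≤ m) :
    2*((m:ℚ)+1) * d (m+1) 0 = (4*(m:ℚ)+3) * d m 0 := by
  rw [d_def', d_def']
  have hz : (2:ℚ)^(-(2*(((m+1):ℕ):ℤ))) = (2:ℚ)^(-(2*(m:ℤ))) * (1/4) := by
    push_cast
    rw [show -(2*((m:ℤ)+1)) = -(2*(m:ℤ)) + (-2) from by ring, zpow_add₀ (by norm_num)]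
    norm_num
  rw [hz, Finset.sum_Icc_succ_top (by omega : 0 ≤ m+1)]
  have main : ∑ k ∈ Finset.Icc 0 m,
      (((m:ℚ)+1)/2 * Fq (m+1) k 0 - (4*(m:ℚ)+3) * Fq m k 0)
      = -(((m:ℚ)+1)/2 * Fq (m+1) (m+1) 0) := by
    obtain ⟨n, hn⟩ : ∃ n, m = n+1 := ⟨m-1, by omega⟩
    rw [hn, Finset.sum_Icc_succ_top (by omega)]
    have tel : ∑ k ∈ Finset.Icc 0 (0+n),
        (((m:ℚ)+1)/2 * Fq (m+1) k 0 - (4*(m:ℚ)+3) * Fq m k 0)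
        = gq0 m (0+n+1) - gq0 m 0 := by
      rw [← telescope_Icc (gq0 m) 0 n]
      apply Finset.sum_congr rfl
      intro k hk
      simp only [Finset.mem_Icc] at hk
      exact pointwise0 m k (by omega)
    simp only [Nat.zero_add] at tel
    rw [hn] at tel
    rw [tel, gq0_zero, sub_zero]
    have hb := boundary0 (n+1)
    push_cast at hb ⊢
    linear_combination hb
  simp only [Finset.sum_sub_distrib, ← Finset.mul_sum] at main
  linear_combination ((2:ℚ)^(-(2*(m:ℤ)))) * main

lemma rectop (m : ℕ) :
    2*((m:ℚ)+1) * d (m+1) (m+1) = (4*(m:ℚ)+2) * d m m := by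
  rw [d_def', d_def']
  have hz : (2:ℚ)^(-(2*(((m+1):ℕ):ℤ))) = (2:ℚ)^(-(2*(m:ℤ))) * (1/4) := by
    push_cast
    rw [show -(2*((m:ℤ)+1)) = -(2*(m:ℤ)) + (-2) from by ring, zpow_add₀ (by norm_num)]
    norm_num
  rw [hz, Finset.Icc_self, Finset.Icc_self, Finset.sum_singleton, Finset.sum_singleton]
  simp only [Fq]
  simp only [show 2*(m+1)-2*(m+1) = 0 from by omega, show (m+1)-(m+1) = 0 from by omega,
    show 2*m-2*m = 0 from by omega, show m-m = 0 from by omega,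
    show (m+1)+(m+1) = 2*m+2 from by omega, show m+m = 2*m from by omega,
    show Nat.choose 0 0 = 1 from rfl, Nat.choose_self]
  have hm0 : ((m:ℚ)+1) ≠ 0 := by positivity
  have Eb_up : (Nat.choose (2*m+2) (m+1) : ℚ)
      = (Nat.choose (2*m) m : ℚ) * ((2*(m:ℚ)+2)*(2*(m:ℚ)+1)) / (((m:ℚ)+1)*((m:ℚ)+1)) := by
    rw [eq_div_iff (by positivity)]
    linear_combination cast_central m
  rw [Eb_up]
  push_cast
  field_simp
  ring

lemma Fq_nonneg (m k i : ℕ) : 0 ≤ Fq m k i := by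
  unfold Fq; positivity

lemma d_pos (m i : ℕ) (h : i ≤ m) : 0 < d m i := by
  rw [d_def']
  apply mul_pos (zpow_pos (by norm_num) _)
  apply Finset.sum_pos' (fun k _ => Fq_nonneg m k i)
  refine ⟨m, Finset.mem_Icc.mpr ⟨h, le_refl m⟩, ?_⟩
  unfold Fq
  simp only [show 2*m-2*m = 0 from by omega, show m-m = 0 from by omega,
    show Nat.choose 0 0 = 1 from rfl]
  have h1 : (0:ℚ) < (Nat.choose (m+m) m : ℚ) := by
    exact_mod_cast Nat.choose_pos (by omega)
  have h2 : (0:ℚ) < (Nat.choose m i : ℚ) := by exact_mod_cast Nat.choose_pos h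
  positivity

lemma d10 : d 1 0 = 3/2 := by
  rw [d_def', show Finset.Icc 0 1 = {0, 1} from rfl]
  simp [Fq]
  norm_num

lemma d11 : d 1 1 = 1 := by
  rw [d_def', show Finset.Icc 1 1 = {1} from rfl]
  simp [Fq]
  norm_num

lemma bounds : ∀ m, 1 ≤ m → ∀ j : ℕ, j + 1 ≤ m →
    (2*(j:ℚ)+1) * d m (j+1) ≤ 2*((m:ℚ)-(j:ℚ)) * d m j ∧
    2*((m:ℚ)-(j:ℚ)) * d m j ≤ (2*(j:ℚ)+3) * d m (j+1) := by
  intro m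
  induction m with
  | zero => omega
  | succ n ih =>
    intro _ j hj
    rcases Nat.eq_zero_or_pos n with hn | hn
    · -- base : n = 0, m = 1, j = 0
      subst hn
      have hj0 : j = 0 := by omega
      subst hj0
      rw [d10, d11]
      norm_num
    · -- n ≥ 1
      have hpos : (0:ℚ) < 2*((n:ℚ)+1) := by positivity
      rcases Nat.eq_zero_or_pos j with hj0 | hj1
      · -- j = 0
        subst hj0
        have h1 := rec0 n hn
        have h2 := recS n 0 (by omega)
        have ihL := (ih hn 0 (by omega)).1
        have ihU := (ih hn 0 (by omega)).2
        have hb : (0:ℚ) ≤ d n 0 := le_of_lt (d_pos n 0 (by omega))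
        constructor
        · rw [← mul_le_mul_iff_right₀ hpos]
          have s1 : (4*(n:ℚ)+5) * ((2*(0:ℚ)+1) * d n (0+1))
              ≤ (4*(n:ℚ)+5) * (2*((n:ℚ)-(0:ℚ)) * d n 0) :=
            mul_le_mul_of_nonneg_left ihL (by positivity)
          push_cast at h1 h2 s1 ⊢
          nlinarith [s1, hb]
        · rw [← mul_le_mul_iff_right₀ hpos]
          have s1 : (4*(n:ℚ)+5) * (2*((n:ℚ)-(0:ℚ)) * d n 0)
              ≤ (4*(n:ℚ)+5) * ((2*(0:ℚ)+3) * d n (0+1)) :=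
            mul_le_mul_of_nonneg_left ihU (by positivity)
          push_cast at h1 h2 s1 ⊢
          nlinarith [s1, hb]
      · -- j ≥ 1
        obtain ⟨t, rfl⟩ : ∃ t, j = t+1 := ⟨j-1, by omega⟩
        rcases Nat.lt_or_ge (t+1) n with htop | htop
        · -- generic: j+1 = t+2 ≤ n
          have h1 := recS n (t+1) (by omega)
          have h2 := recS n t (by omega)
          have ihLj := (ih hn (t+1) (by omega)).1
          have ihUj := (ih hn (t+1) (by omega)).2
          have ihLt := (ih hn t (by omega)).1
          have ihUt := (ih hn t (by omega)).2
          have hb : (0:ℚ) ≤ d n (t+1) := le_of_lt (d_pos n (t+1) (by omega))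
          constructor
          · rw [← mul_le_mul_iff_right₀ hpos]
            have s1 : (4*(n:ℚ)+2*(t:ℚ)+7) * ((2*((t:ℚ)+1)+1) * d n (t+1+1))
                ≤ (4*(n:ℚ)+2*(t:ℚ)+7) * (2*((n:ℚ)-((t:ℚ)+1)) * d n (t+1)) := by
              have := mul_le_mul_of_nonneg_left ihLj (show (0:ℚ) ≤ 4*(n:ℚ)+2*(t:ℚ)+7 by positivity)
              push_cast at this ⊢; linarith
            have s2 : (2*(n:ℚ)+2*(t:ℚ)+2) * ((2*(t:ℚ)+1) * d n (t+1))
                ≤ (2*(n:ℚ)+2*(t:ℚ)+2) * (2*((n:ℚ)-(t:ℚ)) * d n t) :=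
              mul_le_mul_of_nonneg_left ihLt (by positivity)
            push_cast at h1 h2 s1 s2 ⊢
            nlinarith [s1, s2, hb]
          · rw [← mul_le_mul_iff_right₀ hpos]
            have s1 : (4*(n:ℚ)+2*(t:ℚ)+7) * (2*((n:ℚ)-((t:ℚ)+1)) * d n (t+1))
                ≤ (4*(n:ℚ)+2*(t:ℚ)+7) * ((2*((t:ℚ)+1)+3) * d n (t+1+1)) := by
              have := mul_le_mul_of_nonneg_left ihUj (show (0:ℚ) ≤ 4*(n:ℚ)+2*(t:ℚ)+7 by positivity)
              push_cast at this ⊢; linarith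
            have s2 : (2*(n:ℚ)+2*(t:ℚ)+2) * (2*((n:ℚ)-(t:ℚ)) * d n t)
                ≤ (2*(n:ℚ)+2*(t:ℚ)+2) * ((2*(t:ℚ)+3) * d n (t+1)) :=
              mul_le_mul_of_nonneg_left ihUt (by positivity)
            push_cast at h1 h2 s1 s2 ⊢
            nlinarith [s1, s2, hb]
        · -- top: j = t+1 = n
          have hjn : t+1 = n := by omega
          subst hjn
          have h1 := rectop (t+1)
          have h2 := recS (t+1) t (by omega)
          have ihLt := (ih hn t (by omega)).1
          have ihUt := (ih hn t (by omega)).2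
          have hb : (0:ℚ) ≤ d (t+1) (t+1) := le_of_lt (d_pos (t+1) (t+1) (by omega))
          constructor
          · rw [← mul_le_mul_iff_right₀ hpos]
            have s1 : (4*(t:ℚ)+4) * ((2*(t:ℚ)+1) * d (t+1) (t+1))
                ≤ (4*(t:ℚ)+4) * (2*(((t:ℚ)+1)-(t:ℚ)) * d (t+1) t) := by
              have := mul_le_mul_of_nonneg_left ihLt (show (0:ℚ) ≤ 4*(t:ℚ)+4 by positivity)
              push_cast at this ⊢; linarith
            push_cast at h1 h2 s1 ⊢
            nlinarith [s1, hb]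
          · rw [← mul_le_mul_iff_right₀ hpos]
            have s1 : (4*(t:ℚ)+4) * (2*(((t:ℚ)+1)-(t:ℚ)) * d (t+1) t)
                ≤ (4*(t:ℚ)+4) * ((2*(t:ℚ)+3) * d (t+1) (t+1)) := by
              have := mul_le_mul_of_nonneg_left ihUt (show (0:ℚ) ≤ 4*(t:ℚ)+4 by positivity)
              push_cast at this ⊢; linarith
            push_cast at h1 h2 s1 ⊢
            nlinarith [s1, hb]

theorem stmt8 (m i : ℕ) (hm : 2 ≤ m) (hi1 : 1 ≤ i) (hi2 : i ≤ m - 1) :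
    (d m i)^2 ≥ d m (i+1) * d m (i-1) := by
  have him : i + 1 ≤ m := by omega
  obtain ⟨t, rfl⟩ : ∃ t, i = t+1 := ⟨i-1, by omega⟩
  have hU := (bounds m (by omega) t (by omega)).2
  have hL := (bounds m (by omega) (t+1) him).1
  -- hU : 2*(m-t) * d m t ≤ (2t+3) * d m (t+1)
  -- hL : (2(t+1)+1) * d m (t+1+1) ≤ 2*(m-(t+1)) * d m (t+1)
  have ha : (0:ℚ) ≤ d m t := le_of_lt (d_pos m t (by omega))
  have hc : (0:ℚ) ≤ d m (t+1+1) := le_of_lt (d_pos m (t+1+1) (by omega))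
  have hbb : (0:ℚ) ≤ d m (t+1) := le_of_lt (d_pos m (t+1) (by omega))
  have hmt : (0:ℚ) < (m:ℚ)-(t:ℚ) := by
    have : (t:ℚ) + 2 ≤ (m:ℚ) := by exact_mod_cast him
    linarith
  have prod := mul_le_mul hU hL (by positivity) (by positivity)
  simp only [show t+1-1 = t from by omega, show t+1+1 = t+2 from rfl] at *
  push_cast at *
  nlinarith [prod, sq_nonneg (d m (t+1)), mul_nonneg ha hc, hmt, mul_nonneg hbb hbb]
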